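/- Let V be a real vector space of dimension 2n with n ≥ 2, and let μ : V × V → ℝ be a bilinear form. Define R(X,Y) ∈ End(V) by R(X,Y)Z = μ(X,Y)Z − μ(Y,X)Z + μ(X,Z)Y − μ(Y,Z)X, and extend R(X,Y) to an endomorphism of V ⊕ V* by setting (R(X,Y)ξ)(Z) = −ξ(R(X,Y)Z) for ξ ∈ V*. Suppose that for every basis {E_1,...,E_{2n}} of V with dual basis {η_1,...,η_{2n}}, the generalized complex structure J on V defined by J E_{2k−1} = η_{2k}, J E_{2k} = −η_{2k−1} (k = 1,...,n) commutes with R(X,Y) on V ⊕ V* for all X, Y ∈ V. Then μ = 0, and consequently R(X,Y) = 0 for all X, Y ∈ V. -/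

import Mathlib

open Module

noncomputable def gcPhi {V : Type*} [AddCommGroup V] [Module ℝ V] (n : ℕ)
    (E : Basis (Fin (2 * n)) ℝ V) : V →ₗ[ℝ] Module.Dual ℝ V :=
  E.constr ℝ fun i =>
    if h : (i : ℕ) % 2 = 0 then E.dualBasis ⟨(i : ℕ) + 1, by have := i.isLt; omega⟩
    else -E.dualBasis ⟨(i : ℕ) - 1, by have := i.isLt; omega⟩

noncomputable def gcPsi {V : Type*} [AddCommGroup V] [Module ℝ V] [FiniteDimensional ℝ V] (n : ℕ)
    (E : Basis (Fin (2 * n)) ℝ V) : Module.Dual ℝ V →ₗ[ℝ] V :=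
  E.dualBasis.constr ℝ fun i =>
    if h : (i : ℕ) % 2 = 0 then E ⟨(i : ℕ) + 1, by have := i.isLt; omega⟩
    else -E ⟨(i : ℕ) - 1, by have := i.isLt; omega⟩

noncomputable def gcJ {V : Type*} [AddCommGroup V] [Module ℝ V] [FiniteDimensional ℝ V] (n : ℕ)
    (E : Basis (Fin (2 * n)) ℝ V) :
    (V × Module.Dual ℝ V) →ₗ[ℝ] (V × Module.Dual ℝ V) :=
  ((gcPsi n E).comp (LinearMap.snd ℝ V _)).prod ((gcPhi n E).comp (LinearMap.fst ℝ V _))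

lemma gcPhi_basis {V : Type*} [AddCommGroup V] [Module ℝ V] (n : ℕ)
    (E : Basis (Fin (2 * n)) ℝ V) (i : Fin (2 * n)) :
    gcPhi n E (E i) =
      if h : (i : ℕ) % 2 = 0 then E.dualBasis ⟨(i : ℕ) + 1, by have := i.isLt; omega⟩
      else -E.dualBasis ⟨(i : ℕ) - 1, by have := i.isLt; omega⟩ :=
  E.constr_basis ℝ _ i

lemma gcPsi_basis {V : Type*} [AddCommGroup V] [Module ℝ V] [FiniteDimensional ℝ V] (n : ℕ)
    (E : Basis (Fin (2 * n)) ℝ V) (i : Fin (2 * n)) :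
    gcPsi n E (E.dualBasis i) =
      if h : (i : ℕ) % 2 = 0 then E ⟨(i : ℕ) + 1, by have := i.isLt; omega⟩
      else -E ⟨(i : ℕ) - 1, by have := i.isLt; omega⟩ :=
  E.dualBasis.constr_basis ℝ _ i

lemma gcJ_apply {V : Type*} [AddCommGroup V] [Module ℝ V] [FiniteDimensional ℝ V] (n : ℕ)
    (E : Basis (Fin (2 * n)) ℝ V) (v : V) (ξ : Module.Dual ℝ V) :
    gcJ n E (v, ξ) = (gcPsi n E ξ, gcPhi n E v) := rfl

lemma gcPhi_val {V : Type*} [AddCommGroup V] [Module ℝ V] [FiniteDimensional ℝ V] (n : ℕ)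
    (E : Basis (Fin (2 * n)) ℝ V) (i j : Fin (2 * n)) :
    gcPhi n E (E i) (E j) =
      if (i : ℕ) % 2 = 0 then (if (j : ℕ) = (i : ℕ) + 1 then 1 else 0)
      else (if (j : ℕ) = (i : ℕ) - 1 then -1 else 0) := by
  rw [gcPhi_basis]
  by_cases h : (i : ℕ) % 2 = 0
  · rw [dif_pos h, if_pos h, Basis.dualBasis_apply_self]
    simp [Fin.ext_iff]
  · rw [dif_neg h, if_neg h, LinearMap.neg_apply, Basis.dualBasis_apply_self]
    simp only [Fin.ext_iff, Fin.val_mk]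
    split_ifs <;> norm_num

lemma gcJ_cond {V : Type*} [AddCommGroup V] [Module ℝ V] [FiniteDimensional ℝ V] (n : ℕ)
    (E : Basis (Fin (2 * n)) ℝ V) :
    ∀ k : Fin n,
      gcJ n E (E ⟨2 * (k : ℕ), by have := k.isLt; omega⟩, 0) =
        (0, E.dualBasis ⟨2 * (k : ℕ) + 1, by have := k.isLt; omega⟩) ∧
      gcJ n E (E ⟨2 * (k : ℕ) + 1, by have := k.isLt; omega⟩, 0) =
        (0, -E.dualBasis ⟨2 * (k : ℕ), by have := k.isLt; omega⟩) ∧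
      gcJ n E (0, E.dualBasis ⟨2 * (k : ℕ) + 1, by have := k.isLt; omega⟩) =
        (-E ⟨2 * (k : ℕ), by have := k.isLt; omega⟩, 0) ∧
      gcJ n E (0, E.dualBasis ⟨2 * (k : ℕ), by have := k.isLt; omega⟩) =
        (E ⟨2 * (k : ℕ) + 1, by have := k.isLt; omega⟩, 0) := by
  intro k
  have h0 : (2 * (k : ℕ)) % 2 = 0 := by omega
  have h1 : ¬ ((2 * (k : ℕ) + 1) % 2 = 0) := by omega
  refine ⟨?_, ?_, ?_, ?_⟩ <;>
    simp only [gcJ_apply, map_zero, gcPhi_basis, gcPsi_basis, Fin.val_mk, dif_pos h0,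
      dif_neg h1, Nat.add_sub_cancel]


set_option maxHeartbeats 1000000 in
lemma keyCalc {V : Type*} [AddCommGroup V] [Module ℝ V] [FiniteDimensional ℝ V]
    (n : ℕ) (hn : 2 ≤ n) (E : Basis (Fin (2 * n)) ℝ V)
    (μ : V →ₗ[ℝ] V →ₗ[ℝ] ℝ) (R : V → V → (V →ₗ[ℝ] V))
    (hR : ∀ X Y Z : V,
      R X Y Z = μ X Y • Z - μ Y X • Z + μ X Z • Y - μ Y Z • X)
    (hkey : ∀ X Y Z W : V, gcPhi n E (R X Y Z) W = -(gcPhi n E Z (R X Y W))) :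
    μ (E ⟨0, by omega⟩) (E ⟨0, by omega⟩) = 0 ∧
      μ (E ⟨0, by omega⟩) (E ⟨2, by omega⟩) = 0 := by
  have h4 : 4 ≤ 2 * n := by omega
  set i0 : Fin (2 * n) := ⟨0, by omega⟩ with hi0
  set i1 : Fin (2 * n) := ⟨1, by omega⟩ with hi1
  set i2 : Fin (2 * n) := ⟨2, by omega⟩ with hi2
  set i3 : Fin (2 * n) := ⟨3, by omega⟩ with hi3
  have eqA := hkey (E i0) (E i2) (E i0) (E i3)
  have eqB := hkey (E i0) (E i2) (E i2) (E i3)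
  have eqC := hkey (E i0) (E i2) (E i1) (E i0)
  rw [hR, hR] at eqA eqB eqC
  simp only [map_add, map_sub, map_smul, LinearMap.add_apply, LinearMap.sub_apply,
    LinearMap.smul_apply, smul_eq_mul, gcPhi_val, hi0, hi1, hi2, hi3, Fin.val_mk] at eqA eqB eqC
  norm_num at eqA eqB eqC
  constructor
  · linarith
  · linarith

set_option maxHeartbeats 1000000 in
theorem stmt17 {V : Type*} [AddCommGroup V] [Module ℝ V] [FiniteDimensional ℝ V]
    (n : ℕ) (hn : 2 ≤ n) (hdim : Module.finrank ℝ V = 2 * n)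
    (μ : V →ₗ[ℝ] V →ₗ[ℝ] ℝ)
    (R : V → V → (V →ₗ[ℝ] V))
    (hR : ∀ X Y Z : V,
      R X Y Z = μ X Y • Z - μ Y X • Z + μ X Z • Y - μ Y Z • X)
    (Rext : V → V → ((V × Module.Dual ℝ V) →ₗ[ℝ] (V × Module.Dual ℝ V)))
    (hRext : ∀ X Y : V, Rext X Y = (R X Y).prodMap (-(R X Y).dualMap))
    (hcomm : ∀ (E : Basis (Fin (2 * n)) ℝ V)
      (J : (V × Module.Dual ℝ V) →ₗ[ℝ] (V × Module.Dual ℝ V)),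
      (∀ k : Fin n,
        J (E ⟨2 * (k : ℕ), by have := k.isLt; omega⟩, 0) =
          (0, E.dualBasis ⟨2 * (k : ℕ) + 1, by have := k.isLt; omega⟩) ∧
        J (E ⟨2 * (k : ℕ) + 1, by have := k.isLt; omega⟩, 0) =
          (0, -E.dualBasis ⟨2 * (k : ℕ), by have := k.isLt; omega⟩) ∧
        J (0, E.dualBasis ⟨2 * (k : ℕ) + 1, by have := k.isLt; omega⟩) =
          (-E ⟨2 * (k : ℕ), by have := k.isLt; omega⟩, 0) ∧
        J (0, E.dualBasis ⟨2 * (k : ℕ), by have := k.isLt; omega⟩) =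
          (E ⟨2 * (k : ℕ) + 1, by have := k.isLt; omega⟩, 0)) →
      ∀ X Y : V, J ∘ₗ Rext X Y = Rext X Y ∘ₗ J) :
    μ = 0 ∧ ∀ X Y : V, R X Y = 0 := by
  have keyE : ∀ (E : Basis (Fin (2 * n)) ℝ V) (X Y Z W : V),
      gcPhi n E (R X Y Z) W = -(gcPhi n E Z (R X Y W)) := by
    intro E X Y Z W
    have hc := hcomm E (gcJ n E) (gcJ_cond n E) X Y
    have h := DFunLike.congr_fun hc (Z, (0 : Module.Dual ℝ V))
    rw [hRext] at h
    simp only [LinearMap.comp_apply, LinearMap.prodMap_apply, gcJ_apply, map_zero,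
      LinearMap.neg_apply] at h
    have h2 := congrArg Prod.snd h
    simp only at h2
    have := DFunLike.congr_fun h2 W
    simpa [LinearMap.dualMap_apply] using this
  have key2 : ∀ E : Basis (Fin (2 * n)) ℝ V,
      μ (E ⟨0, by omega⟩) (E ⟨0, by omega⟩) = 0 ∧
        μ (E ⟨0, by omega⟩) (E ⟨2, by omega⟩) = 0 :=
    fun E => keyCalc n hn E μ R hR (keyE E)
  obtain ⟨B⟩ : Nonempty (Basis (Fin (2 * n)) ℝ V) :=
    ⟨(Module.finBasis ℝ V).reindex (finCongr hdim)⟩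
  have hdiag : ∀ i : Fin (2 * n), μ (B i) (B i) = 0 := by
    intro i
    have h := (key2 (B.reindex (Equiv.swap ⟨0, by omega⟩ i))).1
    simpa [Basis.reindex_apply, Equiv.symm_swap, Equiv.swap_apply_left] using h
  have hoff : ∀ i j : Fin (2 * n), i ≠ j → μ (B i) (B j) = 0 := by
    intro i j hij
    obtain ⟨σ, hσ0, hσ2⟩ : ∃ σ : Equiv.Perm (Fin (2 * n)),
        σ ⟨0, by omega⟩ = i ∧ σ ⟨2, by omega⟩ = j := by
      have h02 : (⟨0, by omega⟩ : Fin (2 * n)) ≠ ⟨2, by omega⟩ := by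
        simp [Fin.ext_iff]
      have hki0 : Equiv.swap (⟨0, by omega⟩ : Fin (2 * n)) i j ≠ ⟨0, by omega⟩ := by
        intro h
        apply hij
        have h2 := congrArg (Equiv.swap (⟨0, by omega⟩ : Fin (2 * n)) i) h
        simpa [Equiv.swap_apply_self, Equiv.swap_apply_left] using h2.symm
      refine ⟨(Equiv.swap (⟨2, by omega⟩ : Fin (2 * n))
          (Equiv.swap (⟨0, by omega⟩ : Fin (2 * n)) i j)).trans
          (Equiv.swap (⟨0, by omega⟩ : Fin (2 * n)) i), ?_, ?_⟩
      · simp [Equiv.trans_apply, Equiv.swap_apply_of_ne_of_ne h02 (Ne.symm hki0),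
          Equiv.swap_apply_left]
      · simp [Equiv.trans_apply, Equiv.swap_apply_left, Equiv.swap_apply_self]
    have h := (key2 (B.reindex σ.symm)).2
    rw [Basis.reindex_apply, Basis.reindex_apply, Equiv.symm_symm, hσ0, hσ2] at h
    exact h
  have hμ : μ = 0 := by
    apply B.ext
    intro i
    apply B.ext
    intro j
    simp only [LinearMap.zero_apply]
    by_cases h : i = j
    · subst h; exact hdiag i
    · exact hoff i j h
  refine ⟨hμ, ?_⟩
  intro X Y
  apply LinearMap.ext
  intro Z
  rw [hR, hμ]
  simp
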